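/- Let s > 1 be a real number and n ≥ 1 an integer. Then ∫_𝔻 |z|^{2ns} (1−|z|²)^{2s−2} dm(z) ≤ (π^{1−s}/(2s−1)) · (∫_𝔻 |z|^{2n} dm(z))^s, where 𝔻 is the open unit disc in ℂ and dm is Lebesgue area measure; in other words, the Lieb–Solovej inequality on the unit disc holds for the monomial G(z) = zⁿ. -/

import Mathlib

open MeasureTheory Real Set

lemma radial_reduce (g : ℝ → ℝ) :
    ∫ z in {z : ℂ | ‖z‖ < 1}, g (‖z‖)
      = 2 * π * ∫ r in (0:ℝ)..1, r * g r := by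
  have hset : {z : ℂ | ‖z‖ < 1} = Metric.ball (0:ℂ) 1 := by
    ext z; simp [Metric.mem_ball, Complex.dist_eq]
  rw [hset]
  have h1 : ∫ z in Metric.ball (0:ℂ) 1, g (‖z‖)
      = ∫ z : ℂ, (Iio (1:ℝ)).indicator g ‖z‖ := by
    rw [← integral_indicator measurableSet_ball]
    congr 1
    ext z
    by_cases h : ‖z‖ < 1
    · rw [Set.indicator_of_mem (by simpa [Metric.mem_ball, Complex.dist_eq] using h),
        Set.indicator_of_mem (by simpa using h)]
    · rw [Set.indicator_of_notMem (by simpa [Metric.mem_ball, Complex.dist_eq] using h),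
        Set.indicator_of_notMem (by simpa using h)]
  rw [h1, integral_fun_norm_addHaar (volume : Measure ℂ) ((Iio (1:ℝ)).indicator g)]
  rw [Complex.finrank_real_complex, measureReal_def, Complex.volume_ball]
  have h2 : ∫ y in Ioi (0:ℝ), y ^ (2 - 1) • (Iio (1:ℝ)).indicator g y
      = ∫ r in (0:ℝ)..1, r * g r := by
    have : ∀ y : ℝ, y ^ (2 - 1) • (Iio (1:ℝ)).indicator g y
        = (Iio (1:ℝ)).indicator (fun y => y * g y) y := by
      intro y
      simp only [pow_one, smul_eq_mul, Set.indicator_apply]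
      split_ifs <;> simp
    simp_rw [this]
    rw [integral_indicator measurableSet_Iio, Measure.restrict_restrict measurableSet_Iio]
    have : Iio (1:ℝ) ∩ Ioi 0 = Ioo 0 1 := by ext x; simp [and_comm]
    rw [this, intervalIntegral.integral_of_le zero_le_one,
      ← integral_Ioc_eq_integral_Ioo]
  rw [h2]
  simp only [ENNReal.ofReal_one, one_pow, one_mul, ENNReal.toReal_mul]
  rw [smul_eq_mul, nsmul_eq_mul]
  norm_num [NNReal.coe_real_pi]
  ring

lemma sum_sq_ge (n : ℕ) (t : ℝ) (ht0 : 0 ≤ t) :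
    ((n:ℝ)+1) * t^n ≤ (∑ k ∈ Finset.range (n+1), t^k)^2 := by
  have hS : ∀ j, j ∈ Finset.range (n+1) → t^(n-j) ≤ ∑ k ∈ Finset.range (n+1), t^k := by
    intro j hj
    exact Finset.single_le_sum (fun k _ => pow_nonneg ht0 k)
      (Finset.mem_range.mpr (Nat.lt_succ_of_le (Nat.sub_le n j)))
  have h1 : ((n:ℝ)+1) * t^n = ∑ j ∈ Finset.range (n+1), t^j * t^(n-j) := by
    rw [Finset.sum_congr rfl (fun j hj => by
      rw [← pow_add, Nat.add_sub_cancel' (Nat.lt_succ_iff.mp (Finset.mem_range.mp hj))])]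
    simp [mul_comm]
  rw [h1, sq, Finset.sum_mul]
  exact Finset.sum_le_sum fun j hj =>
    mul_le_mul_of_nonneg_left (hS j hj) (pow_nonneg ht0 j)

lemma key_poly (n : ℕ) (t : ℝ) (ht0 : 0 ≤ t) :
    ((n:ℝ)+1) * (t^n * (1-t)^2) ≤ (1 - t^(n+1))^2 := by
  have hg := geom_sum_mul t (n+1)
  have h1 : (1:ℝ) - t^(n+1) = (∑ k ∈ Finset.range (n+1), t^k) * (1 - t) := by
    linear_combination hg
  rw [h1, mul_pow]
  have := mul_le_mul_of_nonneg_right (sum_sq_ge n t ht0) (sq_nonneg (1-t))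
  linarith

lemma pointwise_bound (s : ℝ) (hs : 1 < s) (n : ℕ) (r : ℝ) (hr0 : 0 ≤ r) (hr1 : r ≤ 1) :
    r * (r ^ (2*(n:ℝ)*s) * (1 - r^2) ^ (2*s-2))
      ≤ r^(2*n+1) * ((1 - r^(2*(n+1)))^2 / ((n:ℝ)+1)) ^ (s-1) := by
  rcases eq_or_lt_of_le hr0 with h0 | h0
  · rw [← h0]
    simp
  have h2 : (0:ℝ) ≤ 1 - r^2 := by nlinarith
  have e1 : r ^ (2*(n:ℝ)*s) = r^(2*n) * r ^ (2*(n:ℝ)*(s-1)) := by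
    rw [← Real.rpow_natCast r (2*n), ← Real.rpow_add h0]
    congr 1
    push_cast
    ring
  have e2 : (1 - r^2) ^ (2*s-2) = ((1-r^2)^2) ^ (s-1) := by
    rw [← Real.rpow_natCast (1-r^2) 2, ← Real.rpow_mul h2]
    congr 1
    push_cast
    ring
  have e3 : r ^ (2*(n:ℝ)*(s-1)) = (r^(2*n)) ^ (s-1) := by
    rw [← Real.rpow_natCast r (2*n), ← Real.rpow_mul hr0]
    congr 1
    push_cast
    ring
  have hkey : r^(2*n) * (1-r^2)^2 ≤ (1 - r^(2*(n+1)))^2 / ((n:ℝ)+1) := by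
    rw [le_div_iff₀ (by positivity)]
    have h := key_poly n (r^2) (by positivity)
    have ha : (r^2)^n = r^(2*n) := (pow_mul r 2 n).symm
    have hb : (r^2)^(n+1) = r^(2*(n+1)) := (pow_mul r 2 (n+1)).symm
    rw [ha, hb] at h
    linarith
  calc r * (r ^ (2*(n:ℝ)*s) * (1 - r^2) ^ (2*s-2))
      = r^(2*n+1) * ((r^(2*n) * (1-r^2)^2) ^ (s-1)) := by
        rw [e1, e2, e3, Real.mul_rpow (by positivity) (sq_nonneg _)]
        ring
    _ ≤ r^(2*n+1) * (((1 - r^(2*(n+1)))^2 / ((n:ℝ)+1)) ^ (s-1)) := by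
        apply mul_le_mul_of_nonneg_left _ (by positivity)
        exact Real.rpow_le_rpow (by positivity) hkey (by linarith)

lemma g_integral (s : ℝ) (hs : 1 < s) (n : ℕ) :
    ∫ u in (0:ℝ)..1, ((1-u)^2 / ((n:ℝ)+1)) ^ (s-1)
      = ((n:ℝ)+1)^(1-s) / (2*s-1) := by
  have hn1 : (0:ℝ) ≤ (n:ℝ)+1 := by positivity
  have h1 : ∀ u : ℝ, ((1-u)^2 / ((n:ℝ)+1)) ^ (s-1)
      = ((1-u)^2)^(s-1) / ((n:ℝ)+1)^(s-1) := fun u =>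
    Real.div_rpow (sq_nonneg _) hn1 (s-1)
  simp_rw [h1, div_eq_mul_inv, intervalIntegral.integral_mul_const]
  have h2 : ∫ u in (0:ℝ)..1, ((1-u)^2)^(s-1) = ∫ v in (0:ℝ)..1, (v^2)^(s-1) := by
    have := intervalIntegral.integral_comp_sub_left (a := (0:ℝ)) (b := 1)
      (fun v : ℝ => (v^2)^(s-1)) 1
    simpa using this
  rw [h2]
  have h3 : ∫ v in (0:ℝ)..1, (v^2)^(s-1) = ∫ v in (0:ℝ)..1, v^(2*s-2) := by
    apply intervalIntegral.integral_congr
    intro v hv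
    rw [Set.uIcc_of_le zero_le_one] at hv
    show (v^2)^(s-1) = v^(2*s-2)
    rw [← Real.rpow_natCast v 2, ← Real.rpow_mul hv.1]
    norm_num
    congr 1
    ring
  rw [h3, integral_rpow (Or.inl (by linarith))]
  rw [Real.one_rpow, Real.zero_rpow (by linarith)]
  have e1 : ((n:ℝ)+1)^(1-s) = ((n:ℝ)+1)/((n:ℝ)+1)^s := by
    rw [Real.rpow_sub (by positivity), Real.rpow_one]
  have h4 : ((n:ℝ)+1)^(s-1) = ((n:ℝ)+1)^s / ((n:ℝ)+1) := by
    rw [Real.rpow_sub (by positivity), Real.rpow_one]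
  rw [h4, e1]
  have hp : (0:ℝ) < ((n:ℝ)+1)^s := Real.rpow_pos_of_pos (by positivity) s
  have hn0 : ((n:ℝ)+1) ≠ 0 := by positivity
  have h2s : 2*s - 1 ≠ 0 := by linarith
  have h2s' : 2*s - 2 + 1 ≠ 0 := by linarith
  field_simp
  rw [div_eq_one_iff_eq (by linarith)]
  ring

lemma subst_eq (s : ℝ) (hs : 1 < s) (n : ℕ) :
    ∫ r in (0:ℝ)..1, (2*((n:ℝ)+1) * r^(2*n+1)) * ((1 - (r^(2*(n+1))))^2 / ((n:ℝ)+1)) ^ (s-1)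
      = ∫ u in (0:ℝ)..1, ((1-u)^2 / ((n:ℝ)+1)) ^ (s-1) := by
  have hg : Continuous (fun u : ℝ => ((1-u)^2 / ((n:ℝ)+1)) ^ (s-1)) := by
    apply Continuous.rpow_const (by continuity)
    exact fun x => Or.inr (by linarith)
  have hd : ∀ x ∈ Set.uIcc (0:ℝ) 1,
      HasDerivAt (fun r : ℝ => r^(2*(n+1))) (2*((n:ℝ)+1) * x^(2*n+1)) x := by
    intro x _
    have := hasDerivAt_pow (2*(n+1)) x
    refine this.congr_deriv ?_
    have h : 2*(n+1) - 1 = 2*n+1 := by omega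
    rw [h]
    push_cast
    ring
  have hc : ContinuousOn (fun x : ℝ => 2*((n:ℝ)+1) * x^(2*n+1)) (Set.uIcc 0 1) := by
    fun_prop
  have := intervalIntegral.integral_comp_smul_deriv hd hc hg
  simp only [smul_eq_mul, Function.comp] at this
  rw [this]
  norm_num

/-- The Lieb–Solovej inequality on the unit disc holds for the monomials `z ↦ zⁿ`. -/
theorem lieb_solovej_disc_monomials (s : ℝ) (hs : 1 < s) (n : ℕ) (hn : 1 ≤ n) :
    ∫ z in {z : ℂ | ‖z‖ < 1},
        ‖z‖ ^ (2 * (n : ℝ) * s) * (1 - ‖z‖ ^ 2) ^ (2 * s - 2)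
      ≤ (π ^ (1 - s) / (2 * s - 1)) *
        (∫ z in {z : ℂ | ‖z‖ < 1}, ‖z‖ ^ (2 * n)) ^ s := by
  have hπ : (0:ℝ) < π := pi_pos
  have hn0 : (0:ℝ) < (n:ℝ)+1 := by positivity
  have hps : (0:ℝ) < ((n:ℝ)+1)^s := Real.rpow_pos_of_pos hn0 s
  -- compute the RHS inner integral
  have hB : (∫ z in {z : ℂ | ‖z‖ < 1}, ‖z‖ ^ (2 * n))
      = π / ((n:ℝ)+1) := by
    rw [radial_reduce (fun r => r^(2*n))]
    have : ∀ r : ℝ, r * r^(2*n) = r^(2*n+1) := fun r => (pow_succ' r (2*n)).symm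
    simp_rw [this, integral_pow]
    push_cast
    field_simp
    ring
  -- rewrite the LHS
  rw [radial_reduce (fun r => r ^ (2*(n:ℝ)*s) * (1 - r^2) ^ (2*s-2)), hB]
  -- the integral inequality
  have hint1 : IntervalIntegrable
      (fun r : ℝ => r * (r ^ (2*(n:ℝ)*s) * (1 - r^2) ^ (2*s-2))) volume 0 1 := by
    apply Continuous.intervalIntegrable
    apply Continuous.mul continuous_id
    apply Continuous.mul
    · exact Continuous.rpow_const continuous_id fun x => Or.inr (by positivity)
    · exact Continuous.rpow_const (by continuity) fun x => Or.inr (by linarith)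
  have hint2 : IntervalIntegrable
      (fun r : ℝ => r^(2*n+1) * ((1 - r^(2*(n+1)))^2 / ((n:ℝ)+1)) ^ (s-1)) volume 0 1 := by
    apply Continuous.intervalIntegrable
    apply Continuous.mul (by continuity)
    exact Continuous.rpow_const (by continuity) fun x => Or.inr (by linarith)
  have hmono := intervalIntegral.integral_mono_on (zero_le_one) hint1 hint2
    (fun r hr => pointwise_bound s hs n r hr.1 hr.2)
  -- compute the bounding integral
  have hval : ∫ r in (0:ℝ)..1, r^(2*n+1) * ((1 - r^(2*(n+1)))^2 / ((n:ℝ)+1)) ^ (s-1)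
      = ((n:ℝ)+1)^(1-s) / ((2*s-1) * (2*((n:ℝ)+1))) := by
    have h1 := subst_eq s hs n
    have h2 := g_integral s hs n
    have h3 : ∫ r in (0:ℝ)..1,
        (2*((n:ℝ)+1) * r^(2*n+1)) * ((1 - (r^(2*(n+1))))^2 / ((n:ℝ)+1)) ^ (s-1)
        = (2*((n:ℝ)+1)) * ∫ r in (0:ℝ)..1,
            r^(2*n+1) * ((1 - (r^(2*(n+1))))^2 / ((n:ℝ)+1)) ^ (s-1) := by
      rw [← intervalIntegral.integral_const_mul]
      congr 1
      ext r
      ring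
    rw [h3, h2] at h1
    rw [eq_div_iff (mul_ne_zero (by linarith : (2*s-1:ℝ) ≠ 0)
      (by positivity : (2*((n:ℝ)+1)) ≠ 0))]
    have hc : (2*s-1) * (((n:ℝ)+1)^(1-s)/(2*s-1)) = ((n:ℝ)+1)^(1-s) :=
      mul_div_cancel₀ _ (by linarith)
    linear_combination (2*s-1) * h1 + hc
  have hJ : (∫ r in (0:ℝ)..1, r * (r ^ (2*(n:ℝ)*s) * (1 - r^2) ^ (2*s-2)))
      ≤ ((n:ℝ)+1)^(1-s) / ((2*s-1) * (2*((n:ℝ)+1))) := hval ▸ hmono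
  -- final arithmetic
  have hrhs : (π ^ (1-s) / (2*s-1)) * (π / ((n:ℝ)+1)) ^ s
      = 2 * π * (((n:ℝ)+1)^(1-s) / ((2*s-1) * (2*((n:ℝ)+1)))) := by
    have e1 : π^(1-s) * π^s = π := by
      rw [← Real.rpow_add hπ]
      norm_num
    have e3 : ((n:ℝ)+1)^(1-s) = ((n:ℝ)+1)/((n:ℝ)+1)^s := by
      rw [Real.rpow_sub hn0, Real.rpow_one]
    have h2s : (2*s-1) ≠ 0 := by linarith
    rw [Real.div_rpow (le_of_lt hπ) (le_of_lt hn0), div_mul_div_comm, e1, e3]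
    field_simp
  rw [hrhs]
  have h2π : (0:ℝ) ≤ 2 * π := by positivity
  exact mul_le_mul_of_nonneg_left hJ h2π
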